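/- For every integer n ≥ 1 and every ε ∈ (0,1) there exists δ > 0 (depending only on n and ε) such that there do not exist unit vectors a₁, …, a_{n+2} in EuclideanSpace ℝ (Fin n) with ⟨a₁, a_i⟩ < −ε for all i with 3 ≤ i ≤ n+2 and ⟨a_i, a_j⟩ < δ for all i ≠ j. -/

import Mathlib

open scoped InnerProductSpace

open Finset in
lemma lemA {E : Type*} [NormedAddCommGroup E] [InnerProductSpace ℝ E] {ι : Type*} [Fintype ι]
    {v : ι → E} {w : E} (h1 : ∀ i j, i ≠ j → ⟪v i, v j⟫_ℝ ≤ 0)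
    (h2 : ∀ i, ⟪v i, w⟫_ℝ < 0) : LinearIndependent ℝ v := by
  rw [Fintype.linearIndependent_iff]
  intro g hg
  set p : ι → ℝ := fun i => max (g i) 0 with hp
  set q : ι → ℝ := fun i => max (-g i) 0 with hq
  have hpnn : ∀ i, 0 ≤ p i := fun i => le_max_right _ _
  have hqnn : ∀ i, 0 ≤ q i := fun i => le_max_right _ _
  have hpq : ∀ i, g i = p i - q i := by
    intro i; simp only [hp, hq, max_def]; split_ifs <;> (try push_neg at *) <;> linarith
  have hpq0 : ∀ i, p i * q i = 0 := by
    intro i; simp only [hp, hq, max_def]; split_ifs <;> (try push_neg at *) <;> nlinarith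
  have hPN : (∑ i, p i • v i) = (∑ i, q i • v i) := by
    rw [← sub_eq_zero, ← Finset.sum_sub_distrib]
    have : ∀ i ∈ univ, p i • v i - q i • v i = g i • v i := by
      intro i _; rw [hpq i, sub_smul]
    rw [Finset.sum_congr rfl this]; exact hg
  have hinner : ⟪∑ i, p i • v i, ∑ i, q i • v i⟫_ℝ ≤ 0 := by
    rw [sum_inner]
    apply Finset.sum_nonpos
    intro i _
    rw [inner_sum]
    apply Finset.sum_nonpos
    intro j _
    rw [real_inner_smul_left, real_inner_smul_right]
    rcases eq_or_ne i j with rfl | hij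
    · have h : p i * (q i * ⟪v i, v i⟫_ℝ) = (p i * q i) * ⟪v i, v i⟫_ℝ := by ring
      rw [h, hpq0 i, zero_mul]
    · exact mul_nonpos_of_nonneg_of_nonpos (hpnn i)
        (mul_nonpos_of_nonneg_of_nonpos (hqnn j) (h1 i j hij))
  have hP0 : (∑ i, p i • v i) = 0 := by
    rw [← hPN] at hinner
    have h0 : ⟪∑ i, p i • v i, ∑ i, p i • v i⟫_ℝ = 0 :=
      le_antisymm hinner real_inner_self_nonneg
    exact inner_self_eq_zero.1 h0
  have hQ0 : (∑ i, q i • v i) = 0 := hPN ▸ hP0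
  have hp0 : ∀ i, p i = 0 := by
    have hsum : ∑ i, p i * ⟪v i, w⟫_ℝ = 0 := by
      simp only [← real_inner_smul_left]
      rw [← sum_inner, hP0, inner_zero_left]
    intro i
    have := (Finset.sum_eq_zero_iff_of_nonpos (fun j _ =>
      mul_nonpos_of_nonneg_of_nonpos (hpnn j) (h2 j).le)).1 hsum i (mem_univ i)
    rcases mul_eq_zero.1 this with h | h
    · exact h
    · exact absurd h (h2 i).ne
  have hq0 : ∀ i, q i = 0 := by
    have hsum : ∑ i, q i * ⟪v i, w⟫_ℝ = 0 := by
      simp only [← real_inner_smul_left]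
      rw [← sum_inner, hQ0, inner_zero_left]
    intro i
    have := (Finset.sum_eq_zero_iff_of_nonpos (fun j _ =>
      mul_nonpos_of_nonneg_of_nonpos (hqnn j) (h2 j).le)).1 hsum i (mem_univ i)
    rcases mul_eq_zero.1 this with h | h
    · exact h
    · exact absurd h (h2 i).ne
  intro i
  rw [hpq i, hp0 i, hq0 i, sub_zero]

set_option maxHeartbeats 1000000 in
/-- The point-mass case of Lemma 5.1: for `n ≥ 1` and `ε ∈ (0,1)` there is `δ > 0` such that
there do not exist unit vectors `a₁, …, a_{n+2}` in `ℝⁿ` with `⟪a₁, a_i⟫ < -ε` for `i ≥ 3`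
and `⟪a_i, a_j⟫ < δ` for all `i ≠ j`. -/
theorem stmt_9 (n : ℕ) (hn : 1 ≤ n) (ε : ℝ) (hε : ε ∈ Set.Ioo (0 : ℝ) 1) :
    ∃ δ > (0 : ℝ), ¬ ∃ a : Fin (n + 2) → EuclideanSpace ℝ (Fin n),
      (∀ i, ‖a i‖ = 1) ∧
      (∀ i : Fin (n + 2), 2 ≤ (i : ℕ) → ⟪a 0, a i⟫_ℝ < -ε) ∧
      (∀ i j : Fin (n + 2), i ≠ j → ⟪a i, a j⟫_ℝ < δ) := by
  obtain ⟨hε0, hε1⟩ := hε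
  refine ⟨ε ^ 4 / 1024, by positivity, ?_⟩
  rintro ⟨a, hnorm, hneg, hsmall⟩
  set δ : ℝ := ε ^ 4 / 1024 with hδdef
  have hδpos : 0 < δ := by positivity
  have hδε : δ ≤ ε / 1024 := by
    rw [hδdef]
    have : ε ^ 4 ≤ ε := pow_le_of_le_one hε0.le hε1.le (by norm_num)
    linarith
  set a0 : EuclideanSpace ℝ (Fin n) := a 0 with ha0
  set a1 : EuclideanSpace ℝ (Fin n) := a 1 with ha1
  have h01 : (0 : Fin (n + 2)) ≠ 1 := by
    simp [Fin.ext_iff]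
  set t : ℝ := ⟪a0, a1⟫_ℝ with ht
  have htδ : t < δ := hsmall 0 1 h01
  have hself : ∀ i, ⟪a i, a i⟫_ℝ = 1 := by
    intro i
    rw [real_inner_self_eq_norm_sq, hnorm i]; norm_num
  have hunit : ∀ i j : Fin (n + 2), |⟪a i, a j⟫_ℝ| ≤ 1 := by
    intro i j
    simpa [hnorm i, hnorm j] using abs_real_inner_le_norm (a i) (a j)
  have hi2 : (2 : ℕ) < n + 2 := by omega
  set i2 : Fin (n + 2) := ⟨2, hi2⟩ with hi2def
  have h1i2 : (1 : Fin (n + 2)) ≠ i2 := by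
    simp [Fin.ext_iff, hi2def]
  have hnegi2 : ⟪a0, a i2⟫_ℝ < -ε := hneg i2 (by simp [hi2def])
  rcases lt_or_ge (2 + 2 * t) (ε ^ 2 / 16) with hcase | hcase
  · -- case t close to -1 : a1 ≈ -a0
    have hns : ‖a0 + a1‖ ^ 2 = 2 + 2 * t := by
      rw [norm_add_sq_real, hnorm 0, hnorm 1]; rw [ht]; ring
    have hnlt : ‖a0 + a1‖ < ε / 4 := by
      nlinarith [norm_nonneg (a0 + a1), hns]
    have habs : |⟪a0 + a1, a i2⟫_ℝ| ≤ ‖a0 + a1‖ := by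
      simpa [hnorm i2] using abs_real_inner_le_norm (a0 + a1) (a i2)
    have hsplit : ⟪a1, a i2⟫_ℝ = ⟪a0 + a1, a i2⟫_ℝ - ⟪a0, a i2⟫_ℝ := by
      rw [inner_add_left]; ring
    have hlt := hsmall 1 i2 h1i2
    have := abs_le.1 habs
    rw [hsplit] at hlt
    linarith
  · -- main case
    have ht1 : 1 - t ^ 2 ≥ ε ^ 2 / 64 := by nlinarith
    have ht1pos : (0 : ℝ) < 1 - t ^ 2 := by nlinarith
    set u : EuclideanSpace ℝ (Fin n) := a1 - t • a0 with hu
    have ha0a0 : ⟪a0, a0⟫_ℝ = 1 := hself 0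
    have ha1a1 : ⟪a1, a1⟫_ℝ = 1 := hself 1
    have ha1a0 : ⟪a1, a0⟫_ℝ = t := by rw [real_inner_comm]
    have hu0 : ⟪a0, u⟫_ℝ = 0 := by
      rw [hu, inner_sub_right, real_inner_smul_right, ha0a0, ← ht]; ring
    have hu0' : ⟪u, a0⟫_ℝ = 0 := by rw [real_inner_comm]; exact hu0
    have huu : ⟪u, u⟫_ℝ = 1 - t ^ 2 := by
      rw [hu, inner_sub_left, inner_sub_right, inner_sub_right, real_inner_smul_left,
        real_inner_smul_right, real_inner_smul_left, real_inner_smul_right,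
        ha0a0, ha1a1, ha1a0, ← ht]
      ring
    have hnu : ‖u‖ ≤ 1 := by
      have h2 : ‖u‖ ^ 2 = 1 - t ^ 2 := by rw [← huu, real_inner_self_eq_norm_sq]
      nlinarith [norm_nonneg u]
    -- the n projected vectors
    set idx : Fin n → Fin (n + 2) := fun k => ⟨k.val + 2, by omega⟩ with hidx
    set b : Fin n → EuclideanSpace ℝ (Fin n) := fun k => a (idx k) with hb
    set α : Fin n → ℝ := fun k => ⟪a0, b k⟫_ℝ with hα
    set x : Fin n → ℝ := fun k => ⟪u, b k⟫_ℝ with hx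
    set c : Fin n → EuclideanSpace ℝ (Fin n) := fun k => b k - α k • a0 - (x k / (1 - t ^ 2)) • u with hc
    have hαneg : ∀ k, α k < -ε := by
      intro k; exact hneg (idx k) (by simp [hidx])
    have hα1 : ∀ k, -1 ≤ α k := by
      intro k
      have := abs_le.1 (hunit 0 (idx k))
      exact this.1
    have hxub : ∀ k, x k < 2 * δ := by
      intro k
      have hsplit : x k = ⟪a1, b k⟫_ℝ - t * α k := by
        rw [hx]; simp only [hu, inner_sub_left, real_inner_smul_left]; rfl
      have h1k : ⟪a1, b k⟫_ℝ < δ := hsmall 1 (idx k) (by simp [Fin.ext_iff, hidx])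
      have hkey : (δ - t) * (-(α k)) ≥ 0 :=
        mul_nonneg (by linarith) (by linarith [hαneg k])
      have hmul : δ * (-(α k)) ≤ δ * 1 :=
        mul_le_mul_of_nonneg_left (by linarith [hα1 k]) hδpos.le
      have : -(t * α k) ≤ δ := by nlinarith [hkey, hmul]
      linarith
    have hxlb : ∀ k, -1 ≤ x k := by
      intro k
      have h1 : |x k| ≤ ‖u‖ * ‖b k‖ := abs_real_inner_le_norm u (b k)
      have h2 : ‖b k‖ = 1 := hnorm (idx k)
      rw [h2, mul_one] at h1
      exact (abs_le.1 (h1.trans hnu)).1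
    -- orthogonality of c
    have hca0 : ∀ k, ⟪a0, c k⟫_ℝ = 0 := by
      intro k
      rw [hc]
      simp only [inner_sub_right, real_inner_smul_right, ha0a0, hu0]
      simp only [hα]; ring
    have hcu : ∀ k, ⟪u, c k⟫_ℝ = 0 := by
      intro k
      rw [hc]
      simp only [inner_sub_right, real_inner_smul_right, hu0', huu]
      have hD : (1 - t ^ 2) ≠ 0 := ne_of_gt ht1pos
      simp only [hx]
      rw [div_mul_cancel₀ _ hD]
      ring
    -- inner product formula
    have hcc : ∀ k l, ⟪c k, c l⟫_ℝ =
        ⟪b k, b l⟫_ℝ - α k * α l - x k * x l / (1 - t ^ 2) := by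
      intro k l
      have hba0 : ⟪b k, a0⟫_ℝ = α k := by rw [real_inner_comm]
      have hbu : ⟪b k, u⟫_ℝ = x k := by rw [real_inner_comm]
      have e1 : ⟪a0, b l⟫_ℝ = α l := rfl
      have e2 : ⟪u, b l⟫_ℝ = x l := rfl
      rw [hc]
      simp only [inner_sub_left, inner_sub_right, real_inner_smul_left,
        real_inner_smul_right, ha0a0, hu0, hu0', huu, hba0, hbu, e1, e2]
      have hD : (1 - t ^ 2) ≠ 0 := ne_of_gt ht1pos
      field_simp
      ring
    -- negativity
    have hcneg : ∀ k l, k ≠ l → ⟪c k, c l⟫_ℝ < 0 := by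
      intro k l hkl
      have hbb : ⟪b k, b l⟫_ℝ < δ :=
        hsmall (idx k) (idx l) (by simpa [Fin.ext_iff, hidx] using Fin.val_ne_of_ne hkl)
      have hαα : ε ^ 2 < α k * α l := by nlinarith [hαneg k, hαneg l]
      have hprod : (2 * δ - x k) * (2 * δ - x l) > 0 :=
        mul_pos (by linarith [hxub k]) (by linarith [hxub l])
      have hxx : x k * x l > -4 * δ - 4 * δ ^ 2 := by
        nlinarith [hxlb k, hxlb l]
      rw [hcc k l, sub_neg, lt_div_iff₀ ht1pos]
      have h5 : ⟪b k, b l⟫_ℝ - α k * α l < δ - ε ^ 2 := by linarith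
      have h6 : δ - ε ^ 2 < 0 := by nlinarith
      have h7 : (⟪b k, b l⟫_ℝ - α k * α l) * (1 - t ^ 2) ≤
          (⟪b k, b l⟫_ℝ - α k * α l) * (ε ^ 2 / 64) := by
        apply mul_le_mul_of_nonpos_left ht1 (by linarith)
      have h8 : (⟪b k, b l⟫_ℝ - α k * α l) * (ε ^ 2 / 64) ≤
          (δ - ε ^ 2) * (ε ^ 2 / 64) := by
        apply mul_le_mul_of_nonneg_right h5.le (by positivity)
      have h9 : (δ - ε ^ 2) * (ε ^ 2 / 64) < -4 * δ - 4 * δ ^ 2 := by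
        rw [hδdef]; nlinarith
      linarith
    -- dimension count
    have hLI2 : LinearIndependent ℝ ![a0, u] := by
      rw [LinearIndependent.pair_iff]
      intro s r hsr
      have e0 : ⟪a0, s • a0 + r • u⟫_ℝ = 0 := by rw [hsr]; exact inner_zero_right a0
      have eu : ⟪u, s • a0 + r • u⟫_ℝ = 0 := by rw [hsr]; exact inner_zero_right u
      rw [inner_add_right, real_inner_smul_right, real_inner_smul_right, ha0a0, hu0] at e0
      rw [inner_add_right, real_inner_smul_right, real_inner_smul_right, hu0', huu] at eu
      constructor
      · linarith [e0]
      · have : r * (1 - t ^ 2) = 0 := by linarith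
        rcases mul_eq_zero.1 this with h | h
        · exact h
        · exact absurd h (ne_of_gt ht1pos)
    set S : Submodule ℝ (EuclideanSpace ℝ (Fin n)) := Submodule.span ℝ (Set.range ![a0, u]) with hS
    have hfrS : Module.finrank ℝ S = 2 := by
      rw [hS, finrank_span_eq_card hLI2]
      simp
    have hfrE : Module.finrank ℝ (EuclideanSpace ℝ (Fin n)) = n := finrank_euclideanSpace_fin
    have hsum := Submodule.finrank_add_finrank_orthogonal S
    rw [hfrS, hfrE] at hsum
    have hn2 : 2 ≤ n := by omega
    have hfrW : Module.finrank ℝ (Sᗮ : Submodule ℝ (EuclideanSpace ℝ (Fin n))) = n - 2 := by omega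
    have hmem : ∀ k, c k ∈ Sᗮ := by
      intro k
      rw [Submodule.mem_orthogonal]
      intro v hv
      induction hv using Submodule.span_induction with
      | mem z hz =>
        rcases hz with ⟨i, rfl⟩
        fin_cases i
        · exact hca0 k
        · exact hcu k
      | zero => exact inner_zero_left _
      | add y z _ _ hy hz => rw [inner_add_left, hy, hz]; ring
      | smul r y _ hy => rw [real_inner_smul_left, hy]; ring
    set v' : Fin (n - 1) → (Sᗮ : Submodule ℝ (EuclideanSpace ℝ (Fin n))) :=
      fun k => ⟨c ⟨k.val, by omega⟩, hmem _⟩ with hv'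
    set w' : (Sᗮ : Submodule ℝ (EuclideanSpace ℝ (Fin n))) := ⟨c ⟨n - 1, by omega⟩, hmem _⟩ with hw'
    have hLI : LinearIndependent ℝ v' := by
      apply lemA (w := w')
      · intro i j hij
        have : (⟨i.val, by omega⟩ : Fin n) ≠ ⟨j.val, by omega⟩ := by
          simp only [ne_eq, Fin.mk.injEq]
          exact fun h => hij (Fin.ext h)
        exact (hcneg _ _ this).le
      · intro i
        have : (⟨i.val, by omega⟩ : Fin n) ≠ ⟨n - 1, by omega⟩ := by
          simp only [ne_eq, Fin.mk.injEq]
          omega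
        exact hcneg _ _ this
    have hcard := hLI.fintype_card_le_finrank
    rw [hfrW, Fintype.card_fin] at hcard
    omega
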